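/- Let a₁, …, aₙ be positive integers with total sum B, where B is even. Consider the graph G with vertex set {s, t, v₁, …, vₙ} with edges s–vᵢ and vᵢ–t for all i, vertex weights w(s) = w(t) = B/2 and w(vᵢ) = aᵢ, and edge delays 1 for inter-cluster edges and 0 for intra-cluster edges. Then there exists a subset S₁ ⊆ {1,…,n} with Σ_{i∈S₁} aᵢ = B/2 if and only if there exists a partition of the vertices of G into clusters, each of total weight at most B, such that every (s,t)-path has delay at most 1. -/

import Mathlib

lemma cluster_sum_eq {n B : ℕ} (a : Fin n → ℕ) (c : Fin n ⊕ Bool → ℕ) (j : ℕ) :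
    ∑ v ∈ Finset.univ.filter (fun v => c v = j), Sum.elim a (fun _ => B / 2) v
    = (∑ i ∈ Finset.univ.filter (fun i => c (Sum.inl i) = j), a i)
      + (if c (Sum.inr true) = j then B / 2 else 0)
      + (if c (Sum.inr false) = j then B / 2 else 0) := by
  rw [Finset.sum_filter, Fintype.sum_sum_type, Finset.sum_filter, Fintype.sum_bool]
  simp only [Sum.elim_inl, Sum.elim_inr]
  omega

/-- Correctness of the reduction from Partition to clustering without replication.
    Vertices: `Sum.inl i` is `vᵢ`, `Sum.inr true` is `s`, `Sum.inr false` is `t`.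
    A clustering is a map `c` to cluster indices; each cluster has weight at most `B`;
    an edge has delay 0 iff its endpoints are in the same cluster; every (s,t)-path
    is `s – vᵢ – t` and must have delay at most 1. -/
theorem stmt_8 (n : ℕ) (a : Fin n → ℕ) (ha : ∀ i, 0 < a i)
    (B : ℕ) (hB : B = ∑ i, a i) (hBeven : Even B) :
    (∃ S₁ : Finset (Fin n), ∑ i ∈ S₁, a i = B / 2) ↔
    (∃ c : (Fin n ⊕ Bool) → ℕ,
      (∀ j : ℕ, ∑ v ∈ Finset.univ.filter (fun v => c v = j),
          (Sum.elim a (fun _ => B / 2) v) ≤ B) ∧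
      (∀ i : Fin n,
        ((if c (Sum.inl i) = c (Sum.inr true) then 0 else 1) +
         (if c (Sum.inl i) = c (Sum.inr false) then 0 else 1) : ℕ) ≤ 1)) := by
  obtain ⟨k, hk⟩ := hBeven
  constructor
  · rintro ⟨S₁, hS₁⟩
    refine ⟨Sum.elim (fun i => if i ∈ S₁ then 0 else 1) (fun b => if b then 0 else 1),
      ?_, ?_⟩
    · intro j
      rw [cluster_sum_eq]
      have h0 : ∑ i ∈ Finset.univ.filter
          (fun i => (if i ∈ S₁ then 0 else 1) = j), a i ≤ ∑ i, a i :=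
        Finset.sum_le_sum_of_subset (Finset.filter_subset _ _)
      have hcompl : ∑ i ∈ Finset.univ.filter (fun i => i ∉ S₁), a i
          = ∑ i, a i - ∑ i ∈ S₁, a i := by
        have := Finset.sum_filter_add_sum_filter_not Finset.univ
          (fun i => i ∈ S₁) a
        have h1 : ∑ i ∈ Finset.univ.filter (fun i => i ∈ S₁), a i
            = ∑ i ∈ S₁, a i := by
          congr 1; simp [Finset.filter_mem_eq_inter]
        omega
      rcases Nat.eq_zero_or_pos j with hj | hj
      · subst hj
        have h1 : Finset.univ.filter (fun i => (if i ∈ S₁ then 0 else 1) = 0)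
            = S₁ := by
          ext i; by_cases h : i ∈ S₁ <;> simp [h]
        simp only [Sum.elim_inr, h1]
        norm_num
        omega
      · rcases eq_or_ne j 1 with hj1 | hj1
        · subst hj1
          have h1 : Finset.univ.filter (fun i => (if i ∈ S₁ then 0 else 1) = 1)
              = Finset.univ.filter (fun i => i ∉ S₁) := by
            ext i; by_cases h : i ∈ S₁ <;> simp [h]
          simp only [Sum.elim_inr, h1]
          norm_num
          omega
        · have h1 : Finset.univ.filter (fun i => (if i ∈ S₁ then 0 else 1) = j)
              = ∅ := by
            ext i; by_cases h : i ∈ S₁ <;> simp [h] <;> omega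
          simp only [Sum.elim_inl, Sum.elim_inr, if_true, Bool.false_eq_true,
            if_false, h1, Finset.sum_empty]
          rw [Finset.sum_eq_zero]
          · split_ifs <;> omega
          · intro i hi
            have hi' := (Finset.mem_filter.mp hi).2
            by_cases h : i ∈ S₁ <;> simp [h] at hi' <;> omega
    · intro i
      by_cases h : i ∈ S₁ <;> simp [h]
  · rintro ⟨c, hw, hd⟩
    by_cases hst : c (Sum.inr true) = c (Sum.inr false)
    · -- s and t in same cluster: forces B = 0
      have hall : ∀ i, c (Sum.inl i) = c (Sum.inr true) := by
        intro i
        have := hd i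
        by_cases h1 : c (Sum.inl i) = c (Sum.inr true)
        · exact h1
        · exfalso
          by_cases h2 : c (Sum.inl i) = c (Sum.inr false)
          · exact h1 (h2.trans hst.symm)
          · simp [h1, h2] at this
      have hw0 := hw (c (Sum.inr true))
      rw [cluster_sum_eq] at hw0
      have hfull : Finset.univ.filter
          (fun i => c (Sum.inl i) = c (Sum.inr true)) = Finset.univ := by
        ext i; simp [hall i]
      rw [hfull, if_pos rfl, if_pos hst.symm] at hw0
      have hB0 : B = 0 := by omega
      exact ⟨∅, by simp [hB0]⟩
    · refine ⟨Finset.univ.filter (fun i => c (Sum.inl i) = c (Sum.inr true)), ?_⟩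
      have hsplit : ∀ i, c (Sum.inl i) ≠ c (Sum.inr true) →
          c (Sum.inl i) = c (Sum.inr false) := by
        intro i h1
        have := hd i
        by_cases h2 : c (Sum.inl i) = c (Sum.inr false)
        · exact h2
        · simp [h1, h2] at this
      have hw1 := hw (c (Sum.inr true))
      have hw2 := hw (c (Sum.inr false))
      rw [cluster_sum_eq] at hw1 hw2
      rw [if_pos rfl, if_neg (fun h => hst h.symm)] at hw1
      rw [if_pos rfl, if_neg hst] at hw2
      have hsub : Finset.univ.filter
          (fun i => ¬ c (Sum.inl i) = c (Sum.inr true)) ⊆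
          Finset.univ.filter (fun i => c (Sum.inl i) = c (Sum.inr false)) := by
        intro i hi
        simp only [Finset.mem_filter, Finset.mem_univ, true_and] at hi ⊢
        exact hsplit i hi
      have hsum2 : ∑ i ∈ Finset.univ.filter
          (fun i => ¬ c (Sum.inl i) = c (Sum.inr true)), a i
          ≤ ∑ i ∈ Finset.univ.filter
          (fun i => c (Sum.inl i) = c (Sum.inr false)), a i :=
        Finset.sum_le_sum_of_subset hsub
      have htot := Finset.sum_filter_add_sum_filter_not Finset.univ
        (fun i => c (Sum.inl i) = c (Sum.inr true)) a
      omega
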